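/- For all natural numbers M ≥ 2, K ≥ 1, L ≥ 2, and for every i with 2 ≤ i ≤ L, the number of unordered pairs of distinct vertices of the spider graph Sp(M,K,L) at graph distance exactly L + i equals M·K(K−1)/2·(L − i + 1) + M·K²(M−1)/2·(L − i + 2). -/

import Mathlib

/-- Vertices of the spider graph `Sp(M,K,L)`: `M` core vertices plus
leg vertices `v_{m,k,ℓ}` for `m < M`, `k < K`, `ℓ < L`. -/
abbrev SpiderVertex (M K L : ℕ) := Fin M ⊕ (Fin M × Fin K × Fin L)

/-- Base relation generating the edges of the spider graph. -/
def spiderRel (M K L : ℕ) : SpiderVertex M K L → SpiderVertex M K L → Prop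
  | Sum.inl _, Sum.inl _ => True
  | Sum.inl m, Sum.inr (m', _, l) => m = m' ∧ (l : ℕ) = 0
  | Sum.inr _, Sum.inl _ => False
  | Sum.inr (m, k, l), Sum.inr (m', k', l') =>
      m = m' ∧ k = k' ∧ (l : ℕ) + 1 = (l' : ℕ)

/-- The spider graph `Sp(M,K,L)`. -/
def spiderGraph (M K L : ℕ) : SimpleGraph (SpiderVertex M K L) :=
  SimpleGraph.fromRel (spiderRel M K L)

instance (M K L : ℕ) : DecidableRel (spiderRel M K L) := fun x y =>
  match x, y with
  | Sum.inl _, Sum.inl _ => inferInstanceAs (Decidable True)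
  | Sum.inl m, Sum.inr (m', _, l) => inferInstanceAs (Decidable (m = m' ∧ (l : ℕ) = 0))
  | Sum.inr _, Sum.inl _ => inferInstanceAs (Decidable False)
  | Sum.inr (m, k, l), Sum.inr (m', k', l') =>
      inferInstanceAs (Decidable (m = m' ∧ k = k' ∧ (l : ℕ) + 1 = (l' : ℕ)))

instance (M K L : ℕ) : DecidableRel (spiderGraph M K L).Adj := fun x y =>
  inferInstanceAs (Decidable (x ≠ y ∧ (spiderRel M K L x y ∨ spiderRel M K L y x)))

/-- `alphaSpider M K L j` is the number of unordered pairs of distinct vertices of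
`Sp(M,K,L)` at graph distance exactly `j`. -/
noncomputable def alphaSpider (M K L j : ℕ) : ℕ :=
  Nat.card {p : Sym2 (SpiderVertex M K L) //
    ¬ p.IsDiag ∧ ∀ u v : SpiderVertex M K L, p = s(u, v) →
      (spiderGraph M K L).dist u v = j}


namespace SpiderAux
variable {M K L : ℕ}
/-- Distance formula for the spider graph. -/
def dfun : SpiderVertex M K L → SpiderVertex M K L → ℕ
  | Sum.inl m, Sum.inl m' => if m = m' then 0 else 1
  | Sum.inl m, Sum.inr (m', _, l) => if m = m' then (l : ℕ) + 1 else (l : ℕ) + 2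
  | Sum.inr (m, _, l), Sum.inl m' => if m = m' then (l : ℕ) + 1 else (l : ℕ) + 2
  | Sum.inr (m, k, l), Sum.inr (m', k', l') =>
      if m = m' then
        (if k = k' then ((l : ℕ) - l') + ((l' : ℕ) - l) else (l : ℕ) + l' + 2)
      else (l : ℕ) + l' + 3

lemma dfun_self (x : SpiderVertex M K L) : dfun x x = 0 := by
  rcases x with m | ⟨m, k, l⟩ <;> simp [dfun]

lemma dfun_comm (x y : SpiderVertex M K L) : dfun x y = dfun y x := by
  rcases x with m | ⟨m, k, l⟩ <;> rcases y with m' | ⟨m', k', l'⟩ <;>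
    simp only [dfun] <;> split_ifs <;> simp_all [eq_comm] <;> omega

set_option maxHeartbeats 1000000 in
lemma dfun_lipschitz (x : SpiderVertex M K L) {y z : SpiderVertex M K L}
    (h : (spiderGraph M K L).Adj y z) : dfun x z ≤ dfun x y + 1 := by
  have h' : y ≠ z ∧ (spiderRel M K L y z ∨ spiderRel M K L z y) := h
  clear h
  rcases x with m | ⟨m, k, l⟩ <;> rcases y with m1 | ⟨m1, k1, l1⟩ <;>
    rcases z with m2 | ⟨m2, k2, l2⟩ <;>
    simp only [dfun, spiderRel, ne_eq, Sum.inl.injEq, Sum.inr.injEq, Prod.mk.injEq,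
      Fin.ext_iff, false_or, or_false, and_true, true_and, not_true, not_false_iff,
      Sum.inr_ne_inl, Sum.inl_ne_inr] at h' ⊢ <;>
    split_ifs <;> simp -failIfUnchanged only [Fin.ext_iff] at * <;> omega
end SpiderAux
namespace SpiderAux
variable {M K L : ℕ}

lemma adj_core_core {m m' : Fin M} (h : m ≠ m') :
    (spiderGraph M K L).Adj (Sum.inl m) (Sum.inl m') := by
  refine ⟨by simp [h], Or.inl trivial⟩

lemma adj_core_leg (m : Fin M) (k : Fin K) (l : Fin L) (hl : (l : ℕ) = 0) :
    (spiderGraph M K L).Adj (Sum.inl m) (Sum.inr (m, k, l)) := by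
  exact ⟨by simp, Or.inl ⟨rfl, hl⟩⟩

lemma adj_leg_leg (m : Fin M) (k : Fin K) (a b : Fin L) (h : (a : ℕ) + 1 = b) :
    (spiderGraph M K L).Adj (Sum.inr (m, k, a)) (Sum.inr (m, k, b)) := by
  refine ⟨?_, Or.inl ⟨rfl, rfl, h⟩⟩
  simp only [ne_eq, Sum.inr.injEq, Prod.mk.injEq, Fin.ext_iff]
  omega

/-- walk down a leg -/
lemma walk_down (m : Fin M) (k : Fin K) (a b : Fin L) (hab : (a : ℕ) ≤ b) :
    ∃ w : (spiderGraph M K L).Walk (Sum.inr (m, k, a)) (Sum.inr (m, k, b)),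
      w.length = (b : ℕ) - a := by
  obtain ⟨n, hn⟩ : ∃ n, (b : ℕ) - a = n := ⟨_, rfl⟩
  induction n generalizing b with
  | zero =>
      have : a = b := by apply Fin.ext; omega
      subst this; exact ⟨SimpleGraph.Walk.nil, by simp [hn]⟩
  | succ n ih =>
      have hb : 0 < (b : ℕ) := by omega
      set b' : Fin L := ⟨(b : ℕ) - 1, by omega⟩ with hb'
      obtain ⟨w, hw⟩ := ih b' (by simp [hb']; omega) (by simp [hb']; omega)
      refine ⟨w.concat (adj_leg_leg m k b' b (by simp [hb']; omega)), ?_⟩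
      simp [hw, hb']; omega

lemma walk_core_leg (hL : 1 ≤ L) (m : Fin M) (k : Fin K) (l : Fin L) :
    ∃ w : (spiderGraph M K L).Walk (Sum.inl m) (Sum.inr (m, k, l)),
      w.length = (l : ℕ) + 1 := by
  obtain ⟨w, hw⟩ := walk_down (M := M) m k ⟨0, by omega⟩ l (by simp)
  exact ⟨SimpleGraph.Walk.cons (adj_core_leg m k ⟨0, by omega⟩ rfl) w, by simp [hw]⟩

end SpiderAux
namespace SpiderAux
open SimpleGraph
variable {M K L : ℕ}

lemma dfun_le_length {x y : SpiderVertex M K L} (w : (spiderGraph M K L).Walk x y) :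
    dfun x y ≤ w.length := by
  induction w with
  | nil => simp [dfun_self]
  | @cons u v w h p ih =>
      rw [SimpleGraph.Walk.length_cons]
      calc dfun u w = dfun w u := dfun_comm _ _
        _ ≤ dfun w v + 1 := dfun_lipschitz w h.symm
        _ = dfun v w + 1 := by rw [dfun_comm]
        _ ≤ p.length + 1 := by omega

lemma exists_walk_dfun (x y : SpiderVertex M K L) :
    ∃ w : (spiderGraph M K L).Walk x y, w.length = dfun x y := by
  rcases x with m | ⟨m, k, l⟩ <;> rcases y with m' | ⟨m', k', l'⟩
  · by_cases h : m = m'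
    · subst h; exact ⟨.nil, by simp [dfun]⟩
    · exact ⟨.cons (adj_core_core h) .nil, by simp [dfun, h]⟩
  · have hL : 1 ≤ L := l'.2.trans_le' (by omega)
    by_cases h : m = m'
    · subst h
      obtain ⟨w, hw⟩ := walk_core_leg hL m k' l'
      exact ⟨w, by simp [dfun, hw]⟩
    · obtain ⟨w, hw⟩ := walk_core_leg hL m' k' l'
      exact ⟨.cons (adj_core_core h) w, by simp [dfun, h, hw]⟩
  · have hL : 1 ≤ L := l.2.trans_le' (by omega)
    by_cases h : m = m'
    · subst h
      obtain ⟨w, hw⟩ := walk_core_leg hL m k l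
      exact ⟨w.reverse, by simp [dfun, hw]⟩
    · obtain ⟨w, hw⟩ := walk_core_leg hL m k l
      exact ⟨(SimpleGraph.Walk.cons (adj_core_core (Ne.symm h)) w).reverse,
        by simp [dfun, h, hw]⟩
  · have hL : 1 ≤ L := l.2.trans_le' (by omega)
    by_cases hm : m = m'
    · subst hm
      by_cases hk : k = k'
      · subst hk
        rcases le_or_gt (l : ℕ) (l' : ℕ) with h | h
        · obtain ⟨w, hw⟩ := walk_down m k l l' h
          exact ⟨w, by simp [dfun, hw]; omega⟩
        · obtain ⟨w, hw⟩ := walk_down m k l' l h.le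
          exact ⟨w.reverse, by simp [dfun, hw]; omega⟩
      · obtain ⟨w1, hw1⟩ := walk_core_leg hL m k l
        obtain ⟨w2, hw2⟩ := walk_core_leg hL m k' l'
        exact ⟨w1.reverse.append w2, by simp [dfun, hk, hw1, hw2]; omega⟩
    · obtain ⟨w1, hw1⟩ := walk_core_leg hL m k l
      obtain ⟨w2, hw2⟩ := walk_core_leg hL m' k' l'
      exact ⟨w1.reverse.append (.cons (adj_core_core hm) w2),
        by simp [dfun, hm, hw1, hw2]; omega⟩

lemma spider_dist_eq (x y : SpiderVertex M K L) :
    (spiderGraph M K L).dist x y = dfun x y := by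
  obtain ⟨w, hw⟩ := exists_walk_dfun x y
  refine le_antisymm (hw ▸ SimpleGraph.dist_le w) ?_
  obtain ⟨w', hw'⟩ := SimpleGraph.Reachable.exists_walk_length_eq_dist (⟨w⟩ : (spiderGraph M K L).Reachable x y)
  exact hw' ▸ dfun_le_length w'

end SpiderAux
namespace SpiderAux
open SimpleGraph Finset
variable {M K L : ℕ}

lemma card_pairSum (L c : ℕ) (hL : 1 ≤ L) (h1 : L - 1 ≤ c) (h2 : c ≤ 2*L - 2) :
    ((Finset.univ : Finset (Fin L × Fin L)).filter fun q => (q.1 : ℕ) + q.2 = c).card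
      = 2*L - 1 - c := by
  have hc : (2*L - 1 - c) = (Finset.Icc (c - (L-1)) (L-1)).card := by
    rw [Nat.card_Icc]; omega
  rw [hc]
  refine Finset.card_nbij' (fun q => ((q.1 : ℕ)))
    (fun x => ((⟨min x (L-1), by omega⟩ : Fin L), (⟨min (c - x) (L-1), by omega⟩ : Fin L)))
    ?_ ?_ ?_ ?_
  · intro a ha
    simp only [Finset.mem_coe, Finset.mem_filter, Finset.mem_univ, true_and] at ha
    have := a.1.isLt; have := a.2.isLt
    simp only [Finset.mem_coe, Finset.mem_Icc]; omega
  · intro x hx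
    simp only [Finset.mem_coe, Finset.mem_Icc] at hx
    simp only [Finset.mem_coe, Finset.mem_filter, Finset.mem_univ, true_and]
    omega
  · intro a ha
    simp only [Finset.mem_coe, Finset.mem_filter, Finset.mem_univ, true_and] at ha
    have := a.1.isLt; have := a.2.isLt
    ext <;> simp <;> omega
  · intro x hx
    simp only [Finset.mem_coe, Finset.mem_Icc] at hx
    simp only []
    omega

end SpiderAux
namespace SpiderAux
open SimpleGraph Finset
variable {M K L i : ℕ}

/-- Auxiliary graph whose edges are the pairs at distance `L + i`. -/
def Hgr (M K L i : ℕ) : SimpleGraph (SpiderVertex M K L) :=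
  SimpleGraph.fromRel (fun u v => dfun u v = L + i)

instance : DecidableRel (Hgr M K L i).Adj := fun x y =>
  inferInstanceAs (Decidable (x ≠ y ∧ (dfun x y = L + i ∨ dfun y x = L + i)))

lemma adjH_iff (x y : SpiderVertex M K L) :
    (Hgr M K L i).Adj x y ↔ x ≠ y ∧ dfun x y = L + i := by
  show (x ≠ y ∧ (dfun x y = L + i ∨ dfun y x = L + i)) ↔ _
  rw [dfun_comm y x, or_self]

/-- Whether two vertices are legs attached to the same core vertex. -/
def sameCore : SpiderVertex M K L × SpiderVertex M K L → Bool
  | (Sum.inr (m, _, _), Sum.inr (m', _, _)) => decide (m = m')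
  | _ => false

lemma setA_eq (hi2 : 2 ≤ i) :
    ((univ : Finset (SpiderVertex M K L × SpiderVertex M K L)).filter
        fun p => (Hgr M K L i).Adj p.1 p.2 ∧ sameCore p = true)
      = Finset.image
          (fun t : Fin M × (Fin K × Fin K) × (Fin L × Fin L) =>
            ((Sum.inr (t.1, t.2.1.1, t.2.2.1) : SpiderVertex M K L),
             (Sum.inr (t.1, t.2.1.2, t.2.2.2) : SpiderVertex M K L)))
          (univ.filter fun t => t.2.1.1 ≠ t.2.1.2 ∧ (t.2.2.1 : ℕ) + t.2.2.2 + 2 = L + i) := by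
  ext p
  simp only [mem_filter, mem_univ, true_and, mem_image]
  constructor
  · rintro ⟨hadj, hsc⟩
    obtain ⟨x, y⟩ := p
    rw [adjH_iff] at hadj
    obtain ⟨hne, hd⟩ := hadj
    rcases x with m | ⟨m, k, l⟩ <;> rcases y with m' | ⟨m', k', l'⟩ <;>
      simp only [sameCore, decide_eq_true_eq, Bool.false_eq_true] at hsc
    subst hsc
    by_cases hk : k = k'
    · subst hk; exfalso
      simp [dfun] at hd
      have := l.isLt; have := l'.isLt; omega
    · refine ⟨(m, (k, k'), (l, l')), ?_, rfl⟩
      simp only [mem_filter, mem_univ, true_and]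
      refine ⟨hk, ?_⟩
      simp [dfun, hk] at hd
      omega
  · rintro ⟨⟨m, ⟨k, k'⟩, ⟨l, l'⟩⟩, ht, rfl⟩
    simp only [mem_filter, mem_univ, true_and] at ht
    obtain ⟨hk, hsum⟩ := ht
    refine ⟨?_, by simp [sameCore]⟩
    rw [adjH_iff]
    constructor
    · simp only [ne_eq, Sum.inr.injEq, Prod.mk.injEq]
      tauto
    · simp [dfun, hk]
      omega

lemma setB_eq (hi2 : 2 ≤ i) :
    ((univ : Finset (SpiderVertex M K L × SpiderVertex M K L)).filter
        fun p => (Hgr M K L i).Adj p.1 p.2 ∧ ¬(sameCore p = true))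
      = Finset.image
          (fun t : (Fin M × Fin M) × (Fin K × Fin K) × (Fin L × Fin L) =>
            ((Sum.inr (t.1.1, t.2.1.1, t.2.2.1) : SpiderVertex M K L),
             (Sum.inr (t.1.2, t.2.1.2, t.2.2.2) : SpiderVertex M K L)))
          (univ.filter fun t => t.1.1 ≠ t.1.2 ∧ (t.2.2.1 : ℕ) + t.2.2.2 + 3 = L + i) := by
  ext p
  simp only [mem_filter, mem_univ, true_and, mem_image]
  constructor
  · rintro ⟨hadj, hsc⟩
    obtain ⟨x, y⟩ := p
    rw [adjH_iff] at hadj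
    obtain ⟨hne, hd⟩ := hadj
    rcases x with m | ⟨m, k, l⟩ <;> rcases y with m' | ⟨m', k', l'⟩
    · exfalso
      rcases eq_or_ne m m' with h | h
      · exact hne (by rw [h])
      · simp only [dfun, if_neg h] at hd; omega
    · exfalso
      rcases eq_or_ne m m' with h | h <;>
        · simp only [dfun] at hd
          have := l'.isLt
          split_ifs at hd <;> omega
    · exfalso
      rcases eq_or_ne m m' with h | h <;>
        · simp only [dfun] at hd
          have := l.isLt
          split_ifs at hd <;> omega
    · simp only [sameCore, decide_eq_true_eq] at hsc
      refine ⟨((m, m'), (k, k'), (l, l')), ?_, rfl⟩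
      simp only [mem_filter, mem_univ, true_and]
      refine ⟨hsc, ?_⟩
      simp only [dfun, if_neg hsc] at hd
      omega
  · rintro ⟨⟨⟨m, m'⟩, ⟨k, k'⟩, ⟨l, l'⟩⟩, ht, rfl⟩
    simp only [mem_filter, mem_univ, true_and] at ht
    obtain ⟨hm, hsum⟩ := ht
    refine ⟨?_, by simp [sameCore, hm]⟩
    rw [adjH_iff]
    constructor
    · simp only [ne_eq, Sum.inr.injEq, Prod.mk.injEq]
      tauto
    · simp only [dfun, if_neg hm]
      omega

end SpiderAux
namespace SpiderAux
open SimpleGraph Finset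
variable {M K L i : ℕ}

lemma injA : Function.Injective
    (fun t : Fin M × (Fin K × Fin K) × (Fin L × Fin L) =>
      ((Sum.inr (t.1, t.2.1.1, t.2.2.1) : SpiderVertex M K L),
       (Sum.inr (t.1, t.2.1.2, t.2.2.2) : SpiderVertex M K L))) := by
  rintro ⟨a1, ⟨a2, a3⟩, a4, a5⟩ ⟨b1, ⟨b2, b3⟩, b4, b5⟩ h
  simp only [Prod.mk.injEq, Sum.inr.injEq] at h ⊢
  tauto

lemma injB : Function.Injective
    (fun t : (Fin M × Fin M) × (Fin K × Fin K) × (Fin L × Fin L) =>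
      ((Sum.inr (t.1.1, t.2.1.1, t.2.2.1) : SpiderVertex M K L),
       (Sum.inr (t.1.2, t.2.1.2, t.2.2.2) : SpiderVertex M K L))) := by
  rintro ⟨⟨a0, a1⟩, ⟨a2, a3⟩, a4, a5⟩ ⟨⟨b0, b1⟩, ⟨b2, b3⟩, b4, b5⟩ h
  simp only [Prod.mk.injEq, Sum.inr.injEq] at h ⊢
  tauto

lemma card_ne_pairs (K : ℕ) :
    ((univ : Finset (Fin K × Fin K)).filter fun q => q.1 ≠ q.2).card = K * K - K := by
  have h : ((univ : Finset (Fin K × Fin K)).filter fun q => q.1 ≠ q.2)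
      = (univ : Finset (Fin K)).offDiag := by
    ext ⟨a, b⟩; simp [Finset.mem_offDiag]
  rw [h, Finset.offDiag_card]
  simp

lemma cardA (hL : 2 ≤ L) (hi2 : 2 ≤ i) (hiL : i ≤ L) :
    ((univ : Finset (Fin M × (Fin K × Fin K) × (Fin L × Fin L))).filter
        fun t => t.2.1.1 ≠ t.2.1.2 ∧ (t.2.2.1 : ℕ) + t.2.2.2 + 2 = L + i).card
      = M * ((K * K - K) * (L - i + 1)) := by
  have h : ((univ : Finset (Fin M × (Fin K × Fin K) × (Fin L × Fin L))).filter
        fun t => t.2.1.1 ≠ t.2.1.2 ∧ (t.2.2.1 : ℕ) + t.2.2.2 + 2 = L + i)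
      = univ ×ˢ (((univ : Finset (Fin K × Fin K)).filter fun q => q.1 ≠ q.2) ×ˢ
          ((univ : Finset (Fin L × Fin L)).filter fun q => (q.1 : ℕ) + q.2 = L + i - 2)) := by
    ext t
    simp only [mem_filter, mem_univ, true_and, Finset.mem_product]
    constructor <;> rintro ⟨h1, h2⟩ <;> exact ⟨h1, by omega⟩
  rw [h, Finset.card_product, Finset.card_product, card_ne_pairs,
    card_pairSum L (L + i - 2) (by omega) (by omega) (by omega)]
  have : 2 * L - 1 - (L + i - 2) = L - i + 1 := by omega
  rw [this]
  simp

lemma cardB (hL : 2 ≤ L) (hi2 : 2 ≤ i) (hiL : i ≤ L) :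
    ((univ : Finset ((Fin M × Fin M) × (Fin K × Fin K) × (Fin L × Fin L))).filter
        fun t => t.1.1 ≠ t.1.2 ∧ (t.2.2.1 : ℕ) + t.2.2.2 + 3 = L + i).card
      = (M * M - M) * (K * K * (L - i + 2)) := by
  have h : ((univ : Finset ((Fin M × Fin M) × (Fin K × Fin K) × (Fin L × Fin L))).filter
        fun t => t.1.1 ≠ t.1.2 ∧ (t.2.2.1 : ℕ) + t.2.2.2 + 3 = L + i)
      = ((univ : Finset (Fin M × Fin M)).filter fun q => q.1 ≠ q.2) ×ˢ
          ((univ : Finset (Fin K × Fin K)) ×ˢ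
            ((univ : Finset (Fin L × Fin L)).filter fun q => (q.1 : ℕ) + q.2 = L + i - 3)) := by
    ext t
    simp only [mem_filter, mem_univ, true_and, Finset.mem_product]
    constructor <;> rintro ⟨h1, h2⟩ <;> exact ⟨h1, by omega⟩
  rw [h, Finset.card_product, Finset.card_product, card_ne_pairs,
    card_pairSum L (L + i - 3) (by omega) (by omega) (by omega)]
  have : 2 * L - 1 - (L + i - 3) = L - i + 2 := by omega
  rw [this]
  simp

end SpiderAux
/-- For all `M ≥ 2`, `K ≥ 1`, `L ≥ 2` and `2 ≤ i ≤ L`, the number of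
unordered pairs of distinct vertices of `Sp(M,K,L)` at distance exactly `L + i` equals
`M·K(K−1)/2·(L − i + 1) + M·K²(M−1)/2·(L − i + 2)`. -/
theorem spider_alpha_large (M K L i : ℕ) (hM : 2 ≤ M) (hK : 1 ≤ K) (hL : 2 ≤ L)
    (hi2 : 2 ≤ i) (hiL : i ≤ L) :
    alphaSpider M K L (L + i) =
      M * K * (K - 1) / 2 * (L - i + 1) + M * K ^ 2 * (M - 1) / 2 * (L - i + 2) := by
  have hiff : ∀ p : Sym2 (SpiderVertex M K L),
      (¬ p.IsDiag ∧ ∀ u v : SpiderVertex M K L, p = s(u, v) →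
        (spiderGraph M K L).dist u v = L + i)
        ↔ p ∈ (SpiderAux.Hgr M K L i).edgeSet := by
    intro p
    refine Sym2.inductionOn p fun u v => ?_
    rw [SimpleGraph.mem_edgeSet, SpiderAux.adjH_iff]
    constructor
    · rintro ⟨hd, hall⟩
      have hne : u ≠ v := fun h => hd (by rw [h]; exact Sym2.mk_isDiag_iff.mpr rfl)
      exact ⟨hne, by rw [← SpiderAux.spider_dist_eq]; exact hall u v rfl⟩
    · rintro ⟨hne, hd⟩
      refine ⟨by simp [Sym2.mk_isDiag_iff, hne], ?_⟩
      rintro a b hab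
      rw [Sym2.eq_iff] at hab
      rcases hab with ⟨rfl, rfl⟩ | ⟨rfl, rfl⟩
      · rw [SpiderAux.spider_dist_eq]; exact hd
      · rw [SimpleGraph.dist_comm, SpiderAux.spider_dist_eq]; exact hd
  have halpha : alphaSpider M K L (L + i) = (SpiderAux.Hgr M K L i).edgeFinset.card := by
    rw [alphaSpider, SimpleGraph.edgeFinset_card, ← Nat.card_eq_fintype_card]
    exact Nat.card_congr (Equiv.subtypeEquivRight hiff)
  have h2 := SimpleGraph.two_mul_card_edgeFinset (G := SpiderAux.Hgr M K L i)
  have hform : (Finset.univ.filter fun x : SpiderVertex M K L × SpiderVertex M K L =>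
      match x with | (x, y) => (SpiderAux.Hgr M K L i).Adj x y)
      = (Finset.univ.filter
          fun p : SpiderVertex M K L × SpiderVertex M K L =>
            (SpiderAux.Hgr M K L i).Adj p.1 p.2) := by
    apply Finset.filter_congr
    rintro ⟨x, y⟩ -
    exact Iff.rfl
  have hsplit := Finset.card_filter_add_card_filter_not
    (s := Finset.univ.filter
      fun p : SpiderVertex M K L × SpiderVertex M K L =>
        (SpiderAux.Hgr M K L i).Adj p.1 p.2)
    (p := fun p => SpiderAux.sameCore p = true)
  rw [Finset.filter_filter, Finset.filter_filter, SpiderAux.setA_eq hi2,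
    SpiderAux.setB_eq hi2, Finset.card_image_of_injective _ SpiderAux.injA,
    Finset.card_image_of_injective _ SpiderAux.injB,
    SpiderAux.cardA hL hi2 hiL, SpiderAux.cardB hL hi2 hiL] at hsplit
  have hkey : 2 * alphaSpider M K L (L + i)
      = M * ((K * K - K) * (L - i + 1)) + (M * M - M) * (K * K * (L - i + 2)) := by
    rw [halpha, h2, hform, ← hsplit]
  -- arithmetic
  obtain ⟨K', rfl⟩ : ∃ K', K = K' + 1 := ⟨K - 1, by omega⟩
  obtain ⟨M', rfl⟩ : ∃ M', M = M' + 2 := ⟨M - 2, by omega⟩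
  obtain ⟨a, ha⟩ : ∃ a, a = L - i + 1 := ⟨L - i + 1, rfl⟩
  have ha2 : L - i + 2 = a + 1 := by omega
  rw [← ha, ha2] at hkey ⊢
  have hsub1 : (K' + 1) * (K' + 1) - (K' + 1) = (K' + 1) * K' := by
    rw [mul_add_one, Nat.add_sub_cancel]
  have hsub2 : (M' + 2) * (M' + 2) - (M' + 2) = (M' + 2) * (M' + 1) := by
    have h : (M' + 2) * (M' + 2) = (M' + 2) * (M' + 1) + (M' + 2) := by ring
    rw [h, Nat.add_sub_cancel]
  rw [hsub1, hsub2] at hkey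
  have hd1 : 2 * ((M' + 2) * (K' + 1) * (K' + 1 - 1) / 2) = (M' + 2) * (K' + 1) * K' := by
    rw [Nat.add_sub_cancel]
    apply Nat.mul_div_cancel'
    have heq : (M' + 2) * (K' + 1) * K' = (M' + 2) * (K' * (K' + 1)) := by ring
    have : Even ((M' + 2) * (K' + 1) * K') := by
      rw [heq]; exact (Nat.even_mul_succ_self K').mul_left _
    exact this.two_dvd
  have hd2 : 2 * ((M' + 2) * (K' + 1) ^ 2 * (M' + 2 - 1) / 2)
      = (M' + 2) * (K' + 1) ^ 2 * (M' + 1) := by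
    have : M' + 2 - 1 = M' + 1 := by omega
    rw [this]
    apply Nat.mul_div_cancel'
    have : Even ((M' + 2) * (K' + 1) ^ 2 * (M' + 1)) := by
      have h := Nat.even_mul_succ_self (M' + 1)
      have heq : (M' + 2) * (K' + 1) ^ 2 * (M' + 1) = (K' + 1) ^ 2 * ((M' + 1) * (M' + 2)) := by
        ring
      rw [heq]
      exact h.mul_left _
    exact this.two_dvd
  have htwo : 2 * ((M' + 2) * (K' + 1) * (K' + 1 - 1) / 2 * a
      + (M' + 2) * (K' + 1) ^ 2 * (M' + 2 - 1) / 2 * (a + 1))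
      = 2 * alphaSpider (M' + 2) (K' + 1) L (L + i) := by
    rw [hkey]
    have e1 : 2 * ((M' + 2) * (K' + 1) * (K' + 1 - 1) / 2 * a
        + (M' + 2) * (K' + 1) ^ 2 * (M' + 2 - 1) / 2 * (a + 1))
        = (2 * ((M' + 2) * (K' + 1) * (K' + 1 - 1) / 2)) * a
          + (2 * ((M' + 2) * (K' + 1) ^ 2 * (M' + 2 - 1) / 2)) * (a + 1) := by
      ring
    rw [e1, hd1, hd2]
    ring
  omega
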